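/- Let R be an associative unital ring and M a chain complex of R-modules. Under each of the following conditions, every exact sequence of R-complexes 0 → L → M → N → 0 that is degreewise pure is degreewise split: (a) R is left noetherian and M is a complex of injective R-modules; (b) R is left perfect and M is a complex of projective R-modules; (c) R is semi-perfect and M is a complex of finitely generated projective R-modules; (d) R is left noetherian and M is a complex of finitely generated projective R-modules. -/

import Mathlib

/- Common definitions: chain complexes of modules, purity, pure-acyclicity,
   pure quasi-isomorphisms, flavors of minimality, semi-flat, semi-projective and
   semi-injective complexes, and ring-theoretic conditions, following the paper. -/

open CategoryTheory CategoryTheory.Limits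

universe u

namespace PaperPM

variable (R : Type u) [Ring R]

/-- Chain complexes of left `R`-modules, indexed by `ℤ`. -/
abbrev Cx := ChainComplex (ModuleCat.{u} R) ℤ

section ModuleLevel

variable {L M N : Type u} [AddCommGroup L] [AddCommGroup M] [AddCommGroup N]
  [Module R L] [Module R M] [Module R N]

/-- `0 → L → M → N → 0` is a short exact sequence of modules. -/
def ModSES (f : L →ₗ[R] M) (g : M →ₗ[R] N) : Prop :=
  Function.Injective f ∧ Function.Surjective g ∧ Function.Exact f g

/-- The sequence `0 → Hom(A,L) → Hom(A,M) → Hom(A,N) → 0` is exact for every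
finitely presented module `A`; together with `ModSES` this is purity. -/
def HomExact (f : L →ₗ[R] M) (g : M →ₗ[R] N) : Prop :=
  ∀ (A : Type u) [AddCommGroup A] [Module R A], Module.FinitePresentation R A →
    Function.Injective (fun h : A →ₗ[R] L => f ∘ₗ h) ∧
    Function.Exact (fun h : A →ₗ[R] L => f ∘ₗ h) (fun h : A →ₗ[R] M => g ∘ₗ h) ∧
    Function.Surjective (fun h : A →ₗ[R] M => g ∘ₗ h)

/-- A pure short exact sequence of modules. -/
def PureSES (f : L →ₗ[R] M) (g : M →ₗ[R] N) : Prop :=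
  ModSES R f g ∧ HomExact R f g

end ModuleLevel

/-- A module `F` is flat iff every short exact sequence `0 → L → M → F → 0` is pure. -/
def FlatModule (F : Type u) [AddCommGroup F] [Module R F] : Prop :=
  ∀ (L M : Type u) [AddCommGroup L] [AddCommGroup M] [Module R L] [Module R M]
    (f : L →ₗ[R] M) (g : M →ₗ[R] F), ModSES R f g → HomExact R f g

/-- A module `P` is pure-projective if `Hom(P,−)` leaves every pure exact sequence exact. -/
def PureProjectiveModule (P : Type u) [AddCommGroup P] [Module R P] : Prop :=
  ∀ (L M N : Type u) [AddCommGroup L] [AddCommGroup M] [AddCommGroup N]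
    [Module R L] [Module R M] [Module R N] (f : L →ₗ[R] M) (g : M →ₗ[R] N),
    PureSES R f g →
      Function.Injective (fun h : P →ₗ[R] L => f ∘ₗ h) ∧
      Function.Exact (fun h : P →ₗ[R] L => f ∘ₗ h) (fun h : P →ₗ[R] M => g ∘ₗ h) ∧
      Function.Surjective (fun h : P →ₗ[R] M => g ∘ₗ h)

/-- A module `E` is pure-injective if `Hom(−,E)` leaves every pure exact sequence exact. -/
def PureInjectiveModule (E : Type u) [AddCommGroup E] [Module R E] : Prop :=
  ∀ (L M N : Type u) [AddCommGroup L] [AddCommGroup M] [AddCommGroup N]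
    [Module R L] [Module R M] [Module R N] (f : L →ₗ[R] M) (g : M →ₗ[R] N),
    PureSES R f g →
      Function.Injective (fun h : N →ₗ[R] E => h ∘ₗ g) ∧
      Function.Exact (fun h : N →ₗ[R] E => h ∘ₗ g) (fun h : M →ₗ[R] E => h ∘ₗ f) ∧
      Function.Surjective (fun h : M →ₗ[R] E => h ∘ₗ f)

/-- `R` is von Neumann regular: every (left) `R`-module is flat. -/
def VonNeumannRegular : Prop :=
  ∀ (M : Type u) [AddCommGroup M] [Module R M], FlatModule R M

/-- `R` is left perfect: every flat left `R`-module is projective. -/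
def LeftPerfect : Prop :=
  ∀ (M : Type u) [AddCommGroup M] [Module R M], FlatModule R M → Module.Projective R M

/-- `R` is semi-perfect: every finitely generated flat left `R`-module is projective. -/
def SemiPerfect : Prop :=
  ∀ (M : Type u) [AddCommGroup M] [Module R M],
    Module.Finite R M → FlatModule R M → Module.Projective R M

/-- A complex is acyclic if its homology vanishes, i.e. it is exact at every degree. -/
def Acyclic (M : Cx R) : Prop :=
  ∀ i : ℤ, Function.Exact (M.d (i + 1) i) (M.d i (i - 1))

/-- The cycle submodule `Z_i(M)`. -/
noncomputable def cyc (M : Cx R) (i : ℤ) : Submodule R (M.X i) :=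
  LinearMap.ker (M.d i (i - 1)).hom

lemma d_mem_cyc (M : Cx R) (i : ℤ) (x : M.X i) :
    M.d i (i - 1) x ∈ cyc R M (i - 1) := by
  show (M.d (i - 1) (i - 1 - 1)).hom ((M.d i (i - 1)).hom x) = 0
  have h := congrArg (fun f => ModuleCat.Hom.hom f x) (M.d_comp_d i (i - 1) (i - 1 - 1))
  exact h

/-- The map `M_i → Z_{i-1}(M)` induced by the differential. -/
noncomputable def cycMap (M : Cx R) (i : ℤ) : M.X i →ₗ[R] cyc R M (i - 1) :=
  LinearMap.codRestrict (cyc R M (i - 1)) (M.d i (i - 1)).hom (d_mem_cyc R M i)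

/-- A complex is pure-acyclic if it is acyclic and each sequence
`0 → Z_i(M) → M_i → Z_{i-1}(M) → 0` is pure. -/
def PureAcyclic (M : Cx R) : Prop :=
  ∀ i : ℤ, PureSES R (cyc R M i).subtype (cycMap R M i)

/-- A morphism of complexes is null-homotopic. -/
def NullHomotopic {M N : Cx R} (f : M ⟶ N) : Prop :=
  Nonempty (Homotopy f 0)

/-- A complex is contractible if its identity is null-homotopic. -/
def Contractible (M : Cx R) : Prop :=
  Nonempty (Homotopy (𝟙 M) 0)

/-- A morphism of complexes is a homotopy equivalence: it has an inverse up to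
chain homotopy. -/
def IsHomotopyEquiv {M N : Cx R} (α : M ⟶ N) : Prop :=
  ∃ β : N ⟶ M, Nonempty (Homotopy (α ≫ β) (𝟙 M)) ∧ Nonempty (Homotopy (β ≫ α) (𝟙 N))

/-- A complex is minimal if every homotopy equivalence `M → M` is an isomorphism. -/
def Minimal (M : Cx R) : Prop :=
  ∀ α : M ⟶ M, IsHomotopyEquiv R α → IsIso α

/-- A morphism `α` of complexes is a pure quasi-isomorphism iff its mapping cone is
pure-acyclic, equivalently iff `Hom(A, α)` is a quasi-isomorphism for every finitely
presented module `A`. -/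
def PureQuasiIso {M N : Cx R} (α : M ⟶ N) : Prop :=
  ∀ (A : ModuleCat.{u} R), Module.FinitePresentation R A →
    QuasiIso (((preadditiveCoyoneda.obj (Opposite.op A)).mapHomologicalComplex
      (ComplexShape.down ℤ)).map α)

/-- `0 → L → M → N → 0` is a short exact sequence of complexes. -/
def CxSES {L M N : Cx R} (α : L ⟶ M) (β : M ⟶ N) : Prop :=
  ∀ i : ℤ, Function.Injective (α.f i) ∧ Function.Surjective (β.f i) ∧
    Function.Exact (α.f i) (β.f i)

/-- A short exact sequence of complexes is degreewise pure. -/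
def DegreewisePure {L M N : Cx R} (α : L ⟶ M) (β : M ⟶ N) : Prop :=
  ∀ i : ℤ, HomExact R (α.f i).hom (β.f i).hom

/-- A short exact sequence of complexes is degreewise split. -/
def DegreewiseSplit {L M N : Cx R} (α : L ⟶ M) (β : M ⟶ N) : Prop :=
  ∀ i : ℤ, ∃ ρ : M.X i ⟶ L.X i, α.f i ≫ ρ = 𝟙 (L.X i)

/-- A bounded complex of finitely presented modules. -/
def BoundedFPCx (A : Cx R) : Prop :=
  (∀ i, Module.FinitePresentation R (A.X i)) ∧
  ∃ a b : ℤ, ∀ i, (i < a ∨ b < i) → Subsingleton (A.X i)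

/-- Purity in the category of complexes: the sequence of chain-map groups
`0 → Hom(A,L) → Hom(A,M) → Hom(A,N) → 0` is exact for every bounded complex `A`
of finitely presented modules. -/
def CxPure {L M N : Cx R} (α : L ⟶ M) (β : M ⟶ N) : Prop :=
  ∀ A : Cx R, BoundedFPCx R A →
    Function.Injective (fun h : A ⟶ L => h ≫ α) ∧
    Function.Exact (fun h : A ⟶ L => h ≫ α) (fun h : A ⟶ M => h ≫ β) ∧
    Function.Surjective (fun h : A ⟶ M => h ≫ β)

/-- A complex is pure-minimal if the zero complex is its only pure-acyclic pure
subcomplex. -/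
def PureMinimal (M : Cx R) : Prop :=
  ∀ (P Q : Cx R) (ι : P ⟶ M) (π : M ⟶ Q),
    CxSES R ι π → CxPure R ι π → PureAcyclic R P → IsZero P

/-- A complex is split-minimal if the zero complex is its only contractible split
subcomplex (direct summand). -/
def SplitMinimal (M : Cx R) : Prop :=
  ∀ (P : Cx R) (ι : P ⟶ M) (ρ : M ⟶ P), ι ≫ ρ = 𝟙 P → Contractible R P → IsZero P

/-- A complex is semi-projective if it consists of projective modules and `Hom(P,−)`
preserves acyclicity; the latter amounts to every chain map into an acyclic complex
being null-homotopic. -/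
def SemiProjective (P : Cx R) : Prop :=
  (∀ i, Module.Projective R (P.X i)) ∧
  ∀ N : Cx R, Acyclic R N → ∀ f : P ⟶ N, NullHomotopic R f

/-- A complex is semi-injective if it consists of injective modules and `Hom(−,I)`
preserves acyclicity; the latter amounts to every chain map from an acyclic complex
being null-homotopic. -/
def SemiInjective (I : Cx R) : Prop :=
  (∀ i, Module.Injective R (I.X i)) ∧
  ∀ N : Cx R, Acyclic R N → ∀ f : N ⟶ I, NullHomotopic R f

section Dual

/-- The scalar action making the character group `Hom_ℤ(W, ℚ/ℤ)` of a right
`R`-module `W` a left `R`-module. -/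
noncomputable instance charSMul (W : Type u) [AddCommGroup W] [Module Rᵐᵒᵖ W] :
    SMul R (CharacterModule W) :=
  ⟨fun r f => f.comp (DistribMulAction.toAddMonoidHom W (MulOpposite.op r))⟩

/-- The left `R`-module structure on the character group of a right `R`-module. -/
noncomputable instance charModule (W : Type u) [AddCommGroup W] [Module Rᵐᵒᵖ W] :
    Module R (CharacterModule W) where
  one_smul f := CharacterModule.ext _ fun w => by
    show f (MulOpposite.op (1 : R) • w) = f w
    rw [MulOpposite.op_one, one_smul]
  mul_smul r s f := CharacterModule.ext _ fun w => by
    show f (MulOpposite.op (r * s) • w) = f (MulOpposite.op s • MulOpposite.op r • w)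
    rw [MulOpposite.op_mul, mul_smul]
  smul_zero r := CharacterModule.ext _ fun w => rfl
  smul_add r f g := CharacterModule.ext _ fun w => rfl
  add_smul r s f := CharacterModule.ext _ fun w => by
    show f (MulOpposite.op (r + s) • w) = f (MulOpposite.op r • w) + f (MulOpposite.op s • w)
    rw [MulOpposite.op_add, add_smul, map_add]
  zero_smul f := CharacterModule.ext _ fun w => by
    show f (MulOpposite.op (0 : R) • w) = 0
    rw [MulOpposite.op_zero, zero_smul, map_zero]

/-- The character module of a right `R`-module, as a left `R`-module. -/
noncomputable def dualMod (W : ModuleCat.{u} Rᵐᵒᵖ) : ModuleCat.{u} R :=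
  ModuleCat.of R (CharacterModule W)

/-- The dual of a map of right `R`-modules. -/
noncomputable def dualMap {W W' : ModuleCat.{u} Rᵐᵒᵖ} (g : W ⟶ W') :
    dualMod R W' ⟶ dualMod R W :=
  ModuleCat.ofHom (show CharacterModule ↥W' →ₗ[R] CharacterModule ↥W from
  { toFun := fun (f : CharacterModule ↥W') => (f.comp g.hom.toAddMonoidHom : CharacterModule ↥W),
    map_add' := fun _ _ => rfl,
    map_smul' := fun r (f : CharacterModule ↥W') => CharacterModule.ext _ (fun w =>
      congrArg (fun x => f x) (g.hom.map_smul (MulOpposite.op r) w).symm) })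

lemma dualMap_comp {W W' W'' : ModuleCat.{u} Rᵐᵒᵖ} (g : W ⟶ W') (h : W' ⟶ W'') :
    dualMap R (g ≫ h) = dualMap R h ≫ dualMap R g :=
  ModuleCat.hom_ext (LinearMap.ext fun _ => rfl)

lemma dualMap_zero {W W' : ModuleCat.{u} Rᵐᵒᵖ} : dualMap R (0 : W ⟶ W') = 0 :=
  ModuleCat.hom_ext (LinearMap.ext (fun (f : CharacterModule ↥W') =>
    CharacterModule.ext _ (fun _ => map_zero f)))

/-- The character dual of a complex `N` of right `R`-modules, as a complex of left
`R`-modules: `(N⁺)_i = (N_{-i})⁺`. -/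
noncomputable def dualCx (N : ChainComplex (ModuleCat.{u} Rᵐᵒᵖ) ℤ) : Cx R :=
  ChainComplex.of (fun i => dualMod R (N.X (-i)))
    (fun i => dualMap R (N.d (-i) (-(i + 1))))
    (fun n => by rw [← dualMap_comp, N.d_comp_d, dualMap_zero])

/-- A complex is semi-flat if it consists of flat modules and `− ⊗ F` preserves
acyclicity; by character-module duality the latter amounts to every chain map into
the character dual of an acyclic complex of right `R`-modules being null-homotopic. -/
def SemiFlat (F : Cx R) : Prop :=
  (∀ i, FlatModule R (F.X i)) ∧
  ∀ N : ChainComplex (ModuleCat.{u} Rᵐᵒᵖ) ℤ, Acyclic Rᵐᵒᵖ N →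
    ∀ f : F ⟶ dualCx R N, NullHomotopic R f

end Dual

/-- Two complexes are isomorphic in the derived category iff they are linked by a
roof of quasi-isomorphisms. -/
def DerivedIso (M N : Cx R) : Prop :=
  ∃ (W : Cx R) (f : W ⟶ M) (g : W ⟶ N), QuasiIso f ∧ QuasiIso g

/-- The flat dimension of `M` is at most `n`: `M` is isomorphic in the derived
category to a complex of flat modules concentrated in degrees `≤ n`. -/
def FdLe (M : Cx R) (n : ℤ) : Prop :=
  ∃ F : Cx R, (∀ i, FlatModule R (F.X i)) ∧ (∀ i, n < i → Subsingleton (F.X i)) ∧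
    DerivedIso R M F

/-- The projective dimension of `M` is at most `n`: `M` is isomorphic in the derived
category to a complex of projective modules concentrated in degrees `≤ n`. -/
def PdLe (M : Cx R) (n : ℤ) : Prop :=
  ∃ P : Cx R, (∀ i, Module.Projective R (P.X i)) ∧ (∀ i, n < i → Subsingleton (P.X i)) ∧
    DerivedIso R M P

section Aux

variable {R}
variable {L₀ M₀ N₀ : Type u} [AddCommGroup L₀] [AddCommGroup M₀] [AddCommGroup N₀]
  [Module R L₀] [Module R M₀] [Module R N₀]

/-- From a section of `g` we get a retraction of `f`. -/
lemma aux_retraction_of_section (f : L₀ →ₗ[R] M₀) (g : M₀ →ₗ[R] N₀)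
    (hf : Function.Injective f) (hex : Function.Exact f g)
    (σ : N₀ →ₗ[R] M₀) (hσ : g ∘ₗ σ = LinearMap.id) :
    ∃ ρ : M₀ →ₗ[R] L₀, ρ ∘ₗ f = LinearMap.id := by
  set τ : M₀ →ₗ[R] M₀ := LinearMap.id - σ ∘ₗ g with hτ
  have hmem : ∀ x, τ x ∈ LinearMap.range f := by
    intro x
    refine (hex (τ x)).mp ?_
    have h1 : g (σ (g x)) = g x := LinearMap.congr_fun hσ (g x)
    simp [hτ, h1]
  refine ⟨(LinearEquiv.ofInjective f hf).symm.toLinearMap ∘ₗ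
    LinearMap.codRestrict (LinearMap.range f) τ hmem, ?_⟩
  ext l
  have h0 : g (f l) = 0 := (hex (f l)).mpr ⟨l, rfl⟩
  have hτl : τ (f l) = f l := by simp [hτ, h0]
  apply hf
  simp only [LinearMap.comp_apply, LinearMap.id_apply, LinearMap.codRestrict_apply,
    LinearEquiv.coe_coe]
  set e := LinearEquiv.ofInjective f hf
  set c : LinearMap.range f := ⟨τ (f l), hmem (f l)⟩
  calc f (e.symm c) = ↑(e (e.symm c)) := (LinearEquiv.ofInjective_apply f (e.symm c)).symm
    _ = ↑c := by rw [e.apply_symm_apply]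
    _ = f l := hτl

end Aux

/-- Lemma 1.4: under each of the conditions (a)-(d), every degreewise
pure short exact sequence `0 → L → M → N → 0` of complexes is degreewise split. -/
theorem statement0 (M : Cx R)
    (hcond : (IsNoetherianRing R ∧ ∀ i, Module.Injective R (M.X i)) ∨
      (LeftPerfect R ∧ ∀ i, Module.Projective R (M.X i)) ∨
      (SemiPerfect R ∧ ∀ i, Module.Projective R (M.X i) ∧ Module.Finite R (M.X i)) ∨
      (IsNoetherianRing R ∧ ∀ i, Module.Projective R (M.X i) ∧ Module.Finite R (M.X i))) :
    ∀ (L N : Cx R) (α : L ⟶ M) (β : M ⟶ N),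
      CxSES R α β → DegreewisePure R α β → DegreewiseSplit R α β := by
  intro L N α β hses hp i
  obtain ⟨hinj, hsurj, hex⟩ := hses i
  -- It suffices to produce a retraction of `α.f i` as a linear map.
  suffices h : ∃ ρ : ↥(M.X i) →ₗ[R] ↥(L.X i), ρ ∘ₗ (α.f i).hom = LinearMap.id by
    obtain ⟨ρ, hρ⟩ := h
    exact ⟨ModuleCat.ofHom ρ, ModuleCat.hom_ext hρ⟩
  -- In cases (b), (c), (d) we find a section of `β.f i` first.
  have ofSection : (∃ σ : ↥(N.X i) →ₗ[R] ↥(M.X i), (β.f i).hom ∘ₗ σ = LinearMap.id) →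
      ∃ ρ : ↥(M.X i) →ₗ[R] ↥(L.X i), ρ ∘ₗ (α.f i).hom = LinearMap.id := by
    rintro ⟨σ, hσ⟩
    exact aux_retraction_of_section (α.f i).hom (β.f i).hom hinj hex σ hσ
  -- In cases (b), (c) we show that `N.X i` is flat in the sense of `FlatModule`,
  -- using projectivity of `M.X i` and purity of the given sequence.
  have flatN : Module.Projective R ↥(M.X i) → FlatModule R ↥(N.X i) := by
    intro hMproj
    intro L' M' _ _ _ _ f g ⟨hfinj, hgsurj, hgex⟩ A _ _ hA
    refine ⟨?_, ?_, ?_⟩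
    · intro h₁ h₂ hh
      ext a
      exact hfinj (LinearMap.congr_fun hh a)
    · intro y
      constructor
      · intro hy
        have hy' : ∀ a, g (y a) = 0 := fun a => LinearMap.congr_fun hy a
        have hmem : ∀ a, y a ∈ LinearMap.range f := fun a => (hgex (y a)).mp (hy' a)
        refine ⟨(LinearEquiv.ofInjective f hfinj).symm.toLinearMap ∘ₗ
          LinearMap.codRestrict (LinearMap.range f) y hmem, ?_⟩
        ext a
        simp only [LinearMap.comp_apply, LinearMap.codRestrict_apply, LinearEquiv.coe_coe]
        set e := LinearEquiv.ofInjective f hfinj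
        set c : LinearMap.range f := ⟨y a, hmem a⟩
        calc f (e.symm c) = ↑(e (e.symm c)) := (LinearEquiv.ofInjective_apply f (e.symm c)).symm
          _ = ↑c := by rw [e.apply_symm_apply]
          _ = y a := rfl
      · rintro ⟨x, rfl⟩
        ext a
        exact (hgex (f (x a))).mpr ⟨x a, rfl⟩
    · intro h
      obtain ⟨h', hh'⟩ := (hp i A hA).2.2 h
      haveI := hMproj
      obtain ⟨γ, hγ⟩ := Module.projective_lifting_property g (β.f i).hom hgsurj
      refine ⟨γ ∘ₗ h', ?_⟩
      show g ∘ₗ (γ ∘ₗ h') = h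
      rw [← LinearMap.comp_assoc, hγ]
      exact hh'
  rcases hcond with ⟨hNoeth, hInj⟩ | ⟨hPerf, hProj⟩ | ⟨hSemi, hPF⟩ | ⟨hNoeth, hPF⟩
  · -- (a) R noetherian, `M.X i` injective: show `L.X i` injective via Baer's criterion.
    haveI : IsNoetherianRing R := hNoeth
    have baer : Module.Baer R ↥(L.X i) := by
      intro I φ
      haveI : Module.Finite R (R ⧸ I) :=
        Module.Finite.of_surjective I.mkQ (Submodule.mkQ_surjective I)
      have fp : Module.FinitePresentation R (R ⧸ I) := Module.finitePresentation_of_finite R _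
      obtain ⟨ψ, hψ⟩ := (hInj i).out I.subtype (Submodule.injective_subtype I)
        ((α.f i).hom ∘ₗ φ)
      have hker : I ≤ LinearMap.ker ((β.f i).hom ∘ₗ ψ) := by
        intro a ha
        simp only [LinearMap.mem_ker, LinearMap.comp_apply]
        have h1 : ψ a = α.f i (φ ⟨a, ha⟩) := hψ ⟨a, ha⟩
        rw [h1]
        exact (hex (α.f i (φ ⟨a, ha⟩))).mpr ⟨φ ⟨a, ha⟩, rfl⟩
      set hbar := Submodule.liftQ I ((β.f i).hom ∘ₗ ψ) hker with hbar_def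
      obtain ⟨k, hk⟩ := (hp i (R ⧸ I) fp).2.2 hbar
      have hk' : ∀ x : R ⧸ I, β.f i (k x) = hbar x := fun x => LinearMap.congr_fun hk x
      set m' := k (Submodule.Quotient.mk (1 : R)) with hm'
      have hβ0 : β.f i (ψ 1 - m') = 0 := by
        have h2 : β.f i m' = β.f i (ψ 1) := by
          rw [hm', hk' (Submodule.Quotient.mk (1 : R)), hbar_def]
          simp [Submodule.liftQ_apply]
        rw [map_sub, h2, sub_self]
      obtain ⟨l, hl⟩ := (hex (ψ 1 - m')).mp hβ0
      refine ⟨LinearMap.toSpanSingleton R _ l, ?_⟩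
      intro a ha
      apply hinj
      have hsm : α.f i (a • l) = a • (ψ 1 - m') := by
        rw [map_smul, hl]
      have hma : a • m' = 0 := by
        rw [hm', ← map_smul, ← Submodule.Quotient.mk_smul, smul_eq_mul, mul_one,
          (Submodule.Quotient.mk_eq_zero I).mpr ha, map_zero]
      have hψa : a • ψ 1 = ψ a := by
        rw [← map_smul, smul_eq_mul, mul_one]
      have : α.f i ((LinearMap.toSpanSingleton R ↥(L.X i) l) a) = α.f i (a • l) := rfl
      rw [this, hsm, smul_sub, hma, sub_zero, hψa]
      exact hψ ⟨a, ha⟩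
    haveI : Module.Injective R ↥(L.X i) := baer.injective
    obtain ⟨ρ, hρ⟩ := this.out (α.f i).hom hinj LinearMap.id
    exact ⟨ρ, LinearMap.ext fun x => hρ x⟩
  · -- (b) R left perfect, `M.X i` projective.
    apply ofSection
    haveI : Module.Projective R ↥(N.X i) := hPerf _ (flatN (hProj i))
    exact Module.projective_lifting_property (β.f i).hom LinearMap.id hsurj
  · -- (c) R semi-perfect, `M.X i` finitely generated projective.
    apply ofSection
    haveI : Module.Finite R ↥(M.X i) := (hPF i).2
    haveI : Module.Finite R ↥(N.X i) :=
      Module.Finite.of_surjective (β.f i).hom hsurj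
    haveI : Module.Projective R ↥(N.X i) := hSemi _ ‹_› (flatN (hPF i).1)
    exact Module.projective_lifting_property (β.f i).hom LinearMap.id hsurj
  · -- (d) R noetherian, `M.X i` finitely generated projective.
    apply ofSection
    haveI : IsNoetherianRing R := hNoeth
    haveI : Module.Finite R ↥(M.X i) := (hPF i).2
    haveI : Module.Finite R ↥(N.X i) :=
      Module.Finite.of_surjective (β.f i).hom hsurj
    have fp : Module.FinitePresentation R ↥(N.X i) := Module.finitePresentation_of_finite R _
    obtain ⟨σ, hσ⟩ := (hp i ↥(N.X i) fp).2.2 LinearMap.id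
    exact ⟨σ, hσ⟩

end PaperPM
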